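/- In a conic idempotent residuated lattice, defining x^⋆ := x^ℓ ∧ x^r and x^* := x^ℓ ∨ x^r, we have: x ≤ y^⋆ if and only if y ≤ x^⋆; moreover (x^⋆, x^*) forms a splitting pair, i.e., for every element c, either c ≤ x^⋆ or x^* ≤ c. -/
import Mathlib


/-- In a conic idempotent residuated lattice, with `x^⋆ = x^ℓ ∧ x^r` and
`x^* = x^ℓ ∨ x^r`: `x ≤ y^⋆ ↔ y ≤ x^⋆`, and `(x^⋆, x^*)` is a splitting pair. -/
theorem stmt5 {A : Type*} [Lattice A] [Monoid A]
    (ld rd : A → A → A)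
    (resl : ∀ x y z : A, x * y ≤ z ↔ y ≤ ld x z)
    (resr : ∀ x y z : A, x * y ≤ z ↔ x ≤ rd z y)
    (conic : ∀ a : A, a ≤ 1 ∨ 1 ≤ a)
    (idem : ∀ x : A, x * x = x) :
    (∀ x y : A, x ≤ rd 1 y ⊓ ld y 1 ↔ y ≤ rd 1 x ⊓ ld x 1) ∧
    (∀ x c : A, c ≤ rd 1 x ⊓ ld x 1 ∨ rd 1 x ⊔ ld x 1 ≤ c) := by
  -- multiplication is monotone in each argument
  have monoR : ∀ (a : A) {b b' : A}, b ≤ b' → a * b ≤ a * b' := by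
    intro a b b' h
    exact (resl a b (a * b')).2 (h.trans ((resl a b' (a * b')).1 le_rfl))
  have monoL : ∀ (a : A) {b b' : A}, b ≤ b' → b * a ≤ b' * a := by
    intro a b b' h
    exact (resr b a (b' * a)).2 (h.trans ((resr b' a (b' * a)).1 le_rfl))
  -- multiplication distributes over joins
  have supmul : ∀ a b z : A, (a ⊔ b) * z = a * z ⊔ b * z := by
    intro a b z
    refine le_antisymm ?_ (sup_le (monoL z le_sup_left) (monoL z le_sup_right))
    exact (resr (a ⊔ b) z (a * z ⊔ b * z)).2
      (sup_le ((resr a z _).1 le_sup_left) ((resr b z _).1 le_sup_right))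
  have mulsup : ∀ a b z : A, z * (a ⊔ b) = z * a ⊔ z * b := by
    intro a b z
    refine le_antisymm ?_ (sup_le (monoR z le_sup_left) (monoR z le_sup_right))
    exact (resl z (a ⊔ b) (z * a ⊔ z * b)).2
      (sup_le ((resl z a _).1 le_sup_left) ((resl z b _).1 le_sup_right))
  -- products of negative (resp. positive) elements are meets (resp. joins)
  have negprod : ∀ a b : A, a ≤ 1 → b ≤ 1 → a * b = a ⊓ b := by
    intro a b ha hb
    refine le_antisymm (le_inf ?_ ?_) ?_
    · have := monoR a hb; rwa [mul_one] at this
    · have := monoL b ha; rwa [one_mul] at this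
    · calc a ⊓ b = (a ⊓ b) * (a ⊓ b) := (idem _).symm
        _ ≤ (a ⊓ b) * b := monoR _ inf_le_right
        _ ≤ a * b := monoL b inf_le_left
  have posprod : ∀ a b : A, 1 ≤ a → 1 ≤ b → a * b = a ⊔ b := by
    intro a b ha hb
    refine le_antisymm ?_ (sup_le ?_ ?_)
    · calc a * b ≤ (a ⊔ b) * (a ⊔ b) :=
          (monoR a (le_sup_right : b ≤ a ⊔ b)).trans (monoL _ le_sup_left)
        _ = a ⊔ b := idem _
    · have := monoR a hb; rwa [mul_one] at this
    · have := monoL b ha; rwa [one_mul] at this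
  -- mixed products: a ≤ 1 ≤ b
  have M1 : ∀ a b : A, a ≤ 1 → 1 ≤ b → a * b ≤ 1 → a * b = a := by
    intro a b ha hb h
    refine le_antisymm ?_ ?_
    · calc a * b = a * (a * b) := by rw [← mul_assoc, idem]
        _ ≤ a * 1 := monoR a h
        _ = a := mul_one a
    · have := monoR a hb; rwa [mul_one] at this
  have M2 : ∀ a b : A, a ≤ 1 → 1 ≤ b → 1 ≤ a * b → a * b = b := by
    intro a b ha _ h
    refine le_antisymm ?_ ?_
    · have := monoL b ha; rwa [one_mul] at this
    · calc b = 1 * b := (one_mul b).symm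
        _ ≤ (a * b) * b := monoL b h
        _ = a * b := by rw [mul_assoc, idem]
  have M1' : ∀ a b : A, a ≤ 1 → 1 ≤ b → b * a ≤ 1 → b * a = a := by
    intro a b ha hb h
    refine le_antisymm ?_ ?_
    · calc b * a = (b * a) * a := by rw [mul_assoc, idem]
        _ ≤ 1 * a := monoL a h
        _ = a := one_mul a
    · have := monoL a hb; rwa [one_mul] at this
  have M2' : ∀ a b : A, a ≤ 1 → 1 ≤ b → 1 ≤ b * a → b * a = b := by
    intro a b ha _ h
    refine le_antisymm ?_ ?_
    · have := monoR b ha; rwa [mul_one] at this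
    · calc b = b * 1 := (mul_one b).symm
        _ ≤ b * (b * a) := monoR b h
        _ = b * a := by rw [← mul_assoc, idem]
  -- part 1
  have key : ∀ x y : A, x ≤ rd 1 y ⊓ ld y 1 ↔ (x * y ≤ 1 ∧ y * x ≤ 1) := by
    intro x y
    rw [le_inf_iff]
    constructor
    · rintro ⟨h1, h2⟩; exact ⟨(resr x y 1).2 h1, (resl y x 1).2 h2⟩
    · rintro ⟨h1, h2⟩; exact ⟨(resr x y 1).1 h1, (resl y x 1).1 h2⟩
  refine ⟨fun x y => by rw [key, key]; tauto, ?_⟩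
  -- part 2 : splitting pair
  intro x c
  set L := rd 1 x with hLdef
  set R := ld x 1 with hRdef
  have Lx1 : L * x ≤ 1 := (resr L x 1).2 le_rfl
  have xR1 : x * R ≤ 1 := (resl x R 1).2 le_rfl
  -- general facts
  have hRc : 1 ≤ c * x → R ≤ c := by
    intro hcx
    calc R = 1 * R := (one_mul R).symm
      _ ≤ (c * x) * R := monoL R hcx
      _ = c * (x * R) := mul_assoc c x R
      _ ≤ c * 1 := monoR c xR1
      _ = c := mul_one c
  have hLc : 1 ≤ x * c → L ≤ c := by
    intro hxc
    calc L = L * 1 := (mul_one L).symm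
      _ ≤ L * (x * c) := monoR L hxc
      _ = (L * x) * c := (mul_assoc L x c).symm
      _ ≤ 1 * c := monoL c Lx1
      _ = c := one_mul c
  rcases conic x with hx | hx
  · -- x ≤ 1, hence 1 ≤ L and 1 ≤ R
    have h1L : 1 ≤ L := (resr 1 x 1).1 (by rwa [one_mul])
    have h1R : 1 ≤ R := (resl x 1 1).1 (by rwa [mul_one])
    rcases conic c with hc | hc
    · exact Or.inl (le_inf (hc.trans h1L) (hc.trans h1R))
    · -- 1 ≤ c
      rcases conic (c * x) with hcx | hcx
      · rcases conic (x * c) with hxc | hxc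
        · exact Or.inl (le_inf ((resr c x 1).1 hcx) ((resl x c 1).1 hxc))
        · -- 1 ≤ x*c : show L ≤ c and R ≤ c
          refine Or.inr (sup_le (hLc hxc) ?_)
          calc R = 1 * R := (one_mul R).symm
            _ ≤ (x * c) * R := monoL R hxc
            _ = x * (c * R) := mul_assoc x c R
            _ = x * (c ⊔ R) := by rw [posprod c R hc h1R]
            _ = x * c ⊔ x * R := mulsup c R x
            _ ≤ x * c := sup_le le_rfl (xR1.trans hxc)
            _ ≤ 1 * c := monoL c hx
            _ = c := one_mul c
      · -- 1 ≤ c*x : show L ≤ c and R ≤ c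
        refine Or.inr (sup_le ?_ (hRc hcx))
        calc L = L * 1 := (mul_one L).symm
          _ ≤ L * (c * x) := monoR L hcx
          _ = (L * c) * x := (mul_assoc L c x).symm
          _ = (L ⊔ c) * x := by rw [posprod L c h1L hc]
          _ = L * x ⊔ c * x := supmul L c x
          _ ≤ c * x := sup_le (Lx1.trans hcx) le_rfl
          _ ≤ c * 1 := monoR c hx
          _ = c := mul_one c
  · -- 1 ≤ x, hence L ≤ 1 and R ≤ 1
    have hL1 : L ≤ 1 := by
      have := (monoR L hx).trans Lx1; rwa [mul_one] at this
    have hR1 : R ≤ 1 := by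
      have := (monoL R hx).trans xR1; rwa [one_mul] at this
    rcases conic c with hc | hc
    · -- c ≤ 1
      rcases conic (c * x) with hcx | hcx
      · rcases conic (x * c) with hxc | hxc
        · exact Or.inl (le_inf ((resr c x 1).1 hcx) ((resl x c 1).1 hxc))
        · -- 1 ≤ x*c, c*x ≤ 1 : show L ≤ c and R ≤ c
          refine Or.inr (sup_le (hLc hxc) ?_)
          have hxcx : x * c = x := M2' c x hc hx hxc
          have hxRR : x * R = R := M1' R x hR1 hx xR1
          have hkey : R = x * (c ⊓ R) := by
            calc R = x * R := hxRR.symm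
              _ = (x * c) * R := by rw [hxcx]
              _ = x * (c * R) := mul_assoc x c R
              _ = x * (c ⊓ R) := by rw [negprod c R hc hR1]
          rcases conic (x * (c ⊓ R)) with h | h
          · have : x * (c ⊓ R) = c ⊓ R :=
              M1' (c ⊓ R) x (inf_le_left.trans hc) hx h
            rw [this] at hkey
            exact hkey.le.trans inf_le_left
          · have : x * (c ⊓ R) = x :=
              M2' (c ⊓ R) x (inf_le_left.trans hc) hx h
            rw [this] at hkey
            -- then R = x, but R ≤ 1 ≤ x forces x = 1, hence c = 1
            have hx1 : x = 1 := le_antisymm (hkey ▸ hR1) hx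
            have hc1 : c = 1 := by
              have := hxcx; rw [hx1, one_mul] at this; exact this
            rw [hc1]; exact hR1
      · -- 1 ≤ c*x : show L ≤ c and R ≤ c
        refine Or.inr (sup_le ?_ (hRc hcx))
        have hcxx : c * x = x := M2 c x hc hx hcx
        have hLxL : L * x = L := M1 L x hL1 hx Lx1
        have hkey : L = (L ⊓ c) * x := by
          calc L = L * x := hLxL.symm
            _ = L * (c * x) := by rw [hcxx]
            _ = (L * c) * x := (mul_assoc L c x).symm
            _ = (L ⊓ c) * x := by rw [negprod L c hL1 hc]
        rcases conic ((L ⊓ c) * x) with h | h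
        · have : (L ⊓ c) * x = L ⊓ c :=
            M1 (L ⊓ c) x (inf_le_right.trans hc) hx h
          rw [this] at hkey
          exact hkey.le.trans inf_le_right
        · have : (L ⊓ c) * x = x :=
            M2 (L ⊓ c) x (inf_le_right.trans hc) hx h
          rw [this] at hkey
          have hx1 : x = 1 := le_antisymm (hkey ▸ hL1) hx
          have hc1 : c = 1 := by
            have := hcxx; rw [hx1, mul_one] at this; exact this
          rw [hc1]; exact hL1
    · -- 1 ≤ c
      exact Or.inr (sup_le (hL1.trans hc) (hR1.trans hc))
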